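/- If every sequence of k positive integers summing to n(n-1)/2 is realizable as the color distribution of a Gallai k-coloring of K_n, then n ≥ 2k - 2. -/
import Mathlib


/-- An edge coloring of `K_n` (edges = non-diagonal elements of `Sym2 (Fin n)`)
is a Gallai coloring if no triangle receives three pairwise distinct colors. -/
def IsGallai {n : ℕ} {C : Type*} (c : Sym2 (Fin n) → C) : Prop :=
  ∀ a b d : Fin n, a ≠ b → b ≠ d → a ≠ d →
    c s(a, b) = c s(b, d) ∨ c s(b, d) = c s(a, d) ∨ c s(a, b) = c s(a, d)

/-- The number of edges of `K_n` receiving color `i`. -/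
def colorCard {n : ℕ} {C : Type*} [DecidableEq C] (c : Sym2 (Fin n) → C) (i : C) : ℕ :=
  (Finset.univ.filter (fun e : Sym2 (Fin n) => ¬ e.IsDiag ∧ c e = i)).card

/-- If every sequence of `k` positive integers summing to `C(n,2)` is realizable as the
color distribution of a Gallai `k`-coloring of `K_n` (and such sequences exist, i.e.
`k ≤ C(n,2)`), then `n ≥ 2k - 2`. -/
theorem gallai_all_realizable_lower_bound (n k : ℕ) (hnk : k ≤ n * (n - 1) / 2)
    (H : ∀ e : ℕ → ℕ, (∀ i, i < k → 0 < e i) →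
      ∑ i ∈ Finset.range k, e i = n * (n - 1) / 2 →
      ∃ c : Sym2 (Fin n) → Fin k, IsGallai c ∧ ∀ i : Fin k, colorCard c i = e i.1) :
    2 * k ≤ n + 2 := by
  rcases Nat.lt_or_ge k 2 with hk | hk
  · omega
  have hk0 : 0 < k := by omega
  set m := n * (n - 1) / 2 with hm
  obtain ⟨c, hg, hcard⟩ := H (fun i => (if i = 0 then m - k else 0) + 1)
    (fun i _ => Nat.succ_pos _)
    (by
      rw [Finset.sum_add_distrib, Finset.sum_ite_eq' (Finset.range k) 0 (fun _ => m - k)]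
      simp only [Finset.mem_range.mpr hk0, if_true, Finset.sum_const, Finset.card_range,
        smul_eq_mul, mul_one]
      omega)
  have hone : ∀ i : Fin k, i.1 ≠ 0 → colorCard c i = 1 := by
    intro i hi
    rw [hcard i]
    simp [hi]
  have hedge : ∀ i : Fin k, i.1 ≠ 0 → ∃ a b : Fin n, a ≠ b ∧ c s(a, b) = i ∧
      ∀ x y : Fin n, x ≠ y → c s(x, y) = i → s(x, y) = s(a, b) := by
    intro i hi
    have h1 := hone i hi
    rw [colorCard, Finset.card_eq_one] at h1
    obtain ⟨E, hE⟩ := h1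
    induction E using Sym2.ind with
    | _ a b =>
      have hEmem : s(a, b) ∈ Finset.univ.filter
          (fun e : Sym2 (Fin n) => ¬ e.IsDiag ∧ c e = i) := by
        rw [hE]; simp
      rw [Finset.mem_filter] at hEmem
      obtain ⟨-, hnd, hcE⟩ := hEmem
      refine ⟨a, b, ?_, hcE, ?_⟩
      · intro h; exact hnd (by simp [h])
      · intro x y hxy hcxy
        have hmem : s(x, y) ∈ Finset.univ.filter
            (fun e : Sym2 (Fin n) => ¬ e.IsDiag ∧ c e = i) := by
          simp [hcxy, Sym2.mk_isDiag_iff, hxy]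
        rw [hE, Finset.mem_singleton] at hmem
        exact hmem
  choose a b hab hcab huniq using hedge
  -- key lemma: two distinct singleton colors can't share a vertex
  have key : ∀ (i j : Fin k), i ≠ j → ∀ v x y : Fin n, v ≠ x → v ≠ y →
      c s(v, x) = i → c s(v, y) = j →
      (∀ p q : Fin n, p ≠ q → c s(p, q) = i → s(p, q) = s(v, x)) →
      (∀ p q : Fin n, p ≠ q → c s(p, q) = j → s(p, q) = s(v, y)) → False := by
    intro i j hij v x y hvx hvy hci hcj hui huj
    have hxy : x ≠ y := by
      rintro rfl
      exact hij (hci ▸ hcj ▸ rfl)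
    have hg' := hg x v y (Ne.symm hvx) hvy hxy
    rw [Sym2.eq_swap (a := x) (b := v)] at hg'
    rcases hg' with h | h | h
    · exact hij (hci ▸ hcj ▸ h)
    · have := huj x y hxy (h ▸ hcj)
      rw [Sym2.eq_iff] at this
      rcases this with ⟨h1, -⟩ | ⟨h1, h2⟩
      · exact hvx h1.symm
      · exact hxy h1
    · have := hui x y hxy (h.symm ▸ hci)
      rw [Sym2.eq_iff] at this
      rcases this with ⟨h1, h2⟩ | ⟨-, h2⟩
      · exact hvx h1.symm
      · exact hvy h2.symm
  -- endpoints of distinct singleton colors are pairwise distinct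
  have disj : ∀ (i : Fin k) (hi : i.1 ≠ 0) (j : Fin k) (hj : j.1 ≠ 0), i ≠ j →
      ∀ u w : Fin n, (u = a i hi ∨ u = b i hi) → (w = a j hj ∨ w = b j hj) → u ≠ w := by
    intro i hi j hj hij u w hu hw
    rintro rfl
    -- get for color i: an x with u ≠ x, c s(u,x) = i, and uniqueness
    have Hi : ∃ x : Fin n, u ≠ x ∧ c s(u, x) = i ∧
        ∀ p q : Fin n, p ≠ q → c s(p, q) = i → s(p, q) = s(u, x) := by
      rcases hu with rfl | rfl
      · exact ⟨b i hi, hab i hi, hcab i hi, huniq i hi⟩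
      · refine ⟨a i hi, (hab i hi).symm, ?_, ?_⟩
        · rw [Sym2.eq_swap]; exact hcab i hi
        · intro p q hpq hc
          exact (huniq i hi p q hpq hc).trans (Sym2.eq_swap)
    have Hj : ∃ y : Fin n, u ≠ y ∧ c s(u, y) = j ∧
        ∀ p q : Fin n, p ≠ q → c s(p, q) = j → s(p, q) = s(u, y) := by
      rcases hw with rfl | rfl
      · exact ⟨b j hj, hab j hj, hcab j hj, huniq j hj⟩
      · refine ⟨a j hj, (hab j hj).symm, ?_, ?_⟩
        · rw [Sym2.eq_swap]; exact hcab j hj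
        · intro p q hpq hc
          exact (huniq j hj p q hpq hc).trans (Sym2.eq_swap)
    obtain ⟨x, hux, hcx, hux'⟩ := Hi
    obtain ⟨y, huy, hcy, huy'⟩ := Hj
    exact key i j hij u x y hux huy hcx hcy hux' huy'
  -- build an injection {i // i.1 ≠ 0} × Bool → Fin n
  let f : {i : Fin k // i.1 ≠ 0} × Bool → Fin n :=
    fun p => cond p.2 (a p.1.1 p.1.2) (b p.1.1 p.1.2)
  have finj : Function.Injective f := by
    rintro ⟨⟨i, hi⟩, s⟩ ⟨⟨j, hj⟩, t⟩ h
    by_cases hij : i = j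
    · subst hij
      have hst : s = t := by
        rcases s <;> rcases t
        · rfl
        · exact absurd (h : b i hi = a i hj).symm (hab i hi)
        · exact absurd (h : a i hi = b i hj) (hab i hi)
        · rfl
      subst hst
      rfl
    · exfalso
      rcases s <;> rcases t
      · exact disj i hi j hj hij _ _ (Or.inr rfl) (Or.inr rfl) (h : b i hi = b j hj)
      · exact disj i hi j hj hij _ _ (Or.inr rfl) (Or.inl rfl) (h : b i hi = a j hj)
      · exact disj i hi j hj hij _ _ (Or.inl rfl) (Or.inr rfl) (h : a i hi = b j hj)
      · exact disj i hi j hj hij _ _ (Or.inl rfl) (Or.inl rfl) (h : a i hi = a j hj)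
  have hcardle := Fintype.card_le_of_injective f finj
  have hsub : Fintype.card {i : Fin k // i.1 ≠ 0} = k - 1 := by
    rw [Fintype.card_subtype]
    have : (Finset.univ.filter fun i : Fin k => i.1 ≠ 0) =
        Finset.univ.erase ⟨0, hk0⟩ := by
      ext i
      simp [Fin.ext_iff]
    rw [this, Finset.card_erase_of_mem (Finset.mem_univ _)]
    simp
  rw [Fintype.card_prod, hsub, Fintype.card_bool, Fintype.card_fin] at hcardle
  omega
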